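/- Let k be a commutative ring, A a perfect k-algebra, S a commutative k-algebra, and M an (A⊗_k S, S)-dimodule. Then σ(d)(a ⊗ s) = d(s)(a ⊗ 1) defines a well-defined k-linear map σ : Der_k(S, Cent_k(A⊗_k S, M)) → Der_k(A⊗_k S, M) which is a section of η_{A⊗S,M} (i.e., η_{A⊗S,M} ∘ σ = id); consequently there is a direct sum decomposition Der_k(A⊗_k S, M) ≅ Der_S(A⊗_k S, M) ⊕ Der_k(S, Cent_k(A⊗_k S, M)). -/

import Mathlib

/-- The `k`-submodule `Der_k(B,N)` of `Hom_k(B,N)`: `k`-linear derivations of the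
`R`-algebra `B` (multiplication `mulB`) with values in the `(B,R)`-dimodule `N`. -/
def derkSubmodule {k R B N : Type*} [CommRing k] [CommRing R] [Algebra k R]
    [AddCommGroup B] [Module k B] [Module R B] [IsScalarTower k R B]
    [AddCommGroup N] [Module k N] [Module R N] [IsScalarTower k R N]
    (mulB : B →ₗ[R] B →ₗ[R] B)
    (lactN : B →ₗ[R] N →ₗ[R] N) (ractN : N →ₗ[R] B →ₗ[R] N) :
    Submodule k (B →ₗ[k] N) where
  carrier := {d | ∀ b₁ b₂ : B, d (mulB b₁ b₂) = ractN (d b₁) b₂ + lactN b₁ (d b₂)}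
  add_mem' := by
    intro f g hf hg b₁ b₂
    simp only [LinearMap.add_apply, hf b₁ b₂, hg b₁ b₂, map_add, LinearMap.add_apply]
    abel
  zero_mem' := by intro b₁ b₂; simp
  smul_mem' := by
    intro c f hf b₁ b₂
    simp only [LinearMap.smul_apply, hf b₁ b₂, smul_add,
      LinearMap.map_smul_of_tower, LinearMap.smul_apply]

/-- The `k`-submodule `Der_k(R, Cent_k(B,N))` of `Hom_k(R, Hom_k(B,N))`: `k`-linear
maps `D` on `R` whose values are centroidal transformations and which satisfy the
Leibniz rule `D(r₁r₂) = D(r₁)·r₂ + r₁·D(r₂)` for the `R`-bimodule structure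
`(r·χ)(b) = r • χ(b)`, `(χ·r)(b) = χ(r • b)` of the centroid. -/
def derRCentSubmodule {k R B N : Type*} [CommRing k] [CommRing R] [Algebra k R]
    [AddCommGroup B] [Module k B] [Module R B] [IsScalarTower k R B]
    [AddCommGroup N] [Module k N] [Module R N] [IsScalarTower k R N]
    (mulB : B →ₗ[R] B →ₗ[R] B)
    (lactN : B →ₗ[R] N →ₗ[R] N) (ractN : N →ₗ[R] B →ₗ[R] N) :
    Submodule k (R →ₗ[k] (B →ₗ[k] N)) where
  carrier := {D |
    (∀ (r : R) (b₁ b₂ : B),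
      D r (mulB b₁ b₂) = ractN (D r b₁) b₂ ∧ D r (mulB b₁ b₂) = lactN b₁ (D r b₂)) ∧
    (∀ (r₁ r₂ : R) (b : B),
      D (r₁ * r₂) b = D r₁ (r₂ • b) + r₁ • D r₂ b)}
  add_mem' := by
    intro f g hf hg
    refine ⟨fun r b₁ b₂ => ?_, fun r₁ r₂ b => ?_⟩
    · constructor
      · simp only [LinearMap.add_apply, (hf.1 r b₁ b₂).1, (hg.1 r b₁ b₂).1, map_add,
          LinearMap.add_apply]
      · simp only [LinearMap.add_apply, (hf.1 r b₁ b₂).2, (hg.1 r b₁ b₂).2, map_add]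
    · simp only [LinearMap.add_apply, hf.2 r₁ r₂ b, hg.2 r₁ r₂ b, smul_add]
      abel
  zero_mem' := by
    refine ⟨fun r b₁ b₂ => ?_, fun r₁ r₂ b => ?_⟩ <;> simp
  smul_mem' := by
    intro c f hf
    refine ⟨fun r b₁ b₂ => ?_, fun r₁ r₂ b => ?_⟩
    · constructor
      · simp only [LinearMap.smul_apply, (hf.1 r b₁ b₂).1,
          LinearMap.map_smul_of_tower, LinearMap.smul_apply]
      · simp only [LinearMap.smul_apply, (hf.1 r b₁ b₂).2, LinearMap.map_smul_of_tower]
    · simp only [LinearMap.smul_apply, hf.2 r₁ r₂ b, smul_add, smul_comm c r₁]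

open TensorProduct

/-- Let `A` be a perfect `k`-algebra, `S` a commutative
`k`-algebra, and `M` an `(A ⊗_k S, S)`-dimodule.  Then
`σ(D)(a ⊗ s) = D(s)(a ⊗ 1)` defines a well-defined `k`-linear map
`σ : Der_k(S, Cent_k(A_S, M)) → Der_k(A_S, M)` which is a section of `η_{A_S,M}`
(i.e. `η_{A_S,M}(σ(D)) = D`); consequently every `k`-linear derivation `d` of
`A_S` with values in `M` decomposes uniquely as `d = d₀ + σ(D)` with `d₀` an
`S`-linear derivation and `D ∈ Der_k(S, Cent_k(A_S, M))`, yielding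
`Der_k(A_S, M) ≅ Der_S(A_S, M) ⊕ Der_k(S, Cent_k(A_S, M))`. -/
theorem stmt_11 {k A S M : Type*} [CommRing k]
    [AddCommGroup A] [Module k A]
    [CommRing S] [Algebra k S]
    [AddCommGroup M] [Module k M] [Module S M] [IsScalarTower k S M]
    (mul : A →ₗ[k] A →ₗ[k] A)
    (hperf : Submodule.span k {x : A | ∃ a b : A, x = mul a b} = ⊤)
    (mulS : (S ⊗[k] A) →ₗ[S] (S ⊗[k] A) →ₗ[S] (S ⊗[k] A))
    (hmulS : ∀ (s₁ s₂ : S) (a₁ a₂ : A),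
      mulS (s₁ ⊗ₜ a₁) (s₂ ⊗ₜ a₂) = (s₁ * s₂) ⊗ₜ (mul a₁ a₂))
    (lact : (S ⊗[k] A) →ₗ[S] M →ₗ[S] M) (ract : M →ₗ[S] (S ⊗[k] A) →ₗ[S] M) :
    ∃ σ : ↥(derRCentSubmodule (k := k) mulS lact ract) →ₗ[k] ((S ⊗[k] A) →ₗ[k] M),
      (∀ (D : ↥(derRCentSubmodule (k := k) mulS lact ract)) (s : S) (a : A),
        σ D (s ⊗ₜ a) = D.1 s ((1 : S) ⊗ₜ a)) ∧
      (∀ D, σ D ∈ derkSubmodule (k := k) mulS lact ract) ∧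
      (∀ (D : ↥(derRCentSubmodule (k := k) mulS lact ract)) (s : S) (x : S ⊗[k] A),
        σ D (s • x) - s • σ D x = D.1 s x) ∧
      (∀ d : (S ⊗[k] A) →ₗ[k] M, d ∈ derkSubmodule (k := k) mulS lact ract →
        ∃! p : ((S ⊗[k] A) →ₗ[k] M) × ↥(derRCentSubmodule (k := k) mulS lact ract),
          p.1 ∈ derkSubmodule (k := k) mulS lact ract ∧
          (∀ (s : S) (x : S ⊗[k] A), p.1 (s • x) = s • p.1 x) ∧
          d = p.1 + σ p.2) := by
  classical
  let ι : A →ₗ[k] S ⊗[k] A := TensorProduct.mk k S A 1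
  let σfun : (S →ₗ[k] (S ⊗[k] A →ₗ[k] M)) → (S ⊗[k] A →ₗ[k] M) :=
    fun D => TensorProduct.lift (((LinearMap.llcomp k A (S ⊗[k] A) M).flip ι) ∘ₗ D)
  have σtmul : ∀ (D : S →ₗ[k] (S ⊗[k] A →ₗ[k] M)) (s : S) (a : A),
      σfun D (s ⊗ₜ a) = D s ((1 : S) ⊗ₜ a) := fun D s a => rfl
  -- key property 2 : σfun D is a derivation when D is in the submodule
  have hderiv : ∀ D : ↥(derRCentSubmodule (k := k) mulS lact ract),
      ∀ x y : S ⊗[k] A,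
        σfun D.1 (mulS x y) = ract (σfun D.1 x) y + lact x (σfun D.1 y) := by
    rintro ⟨D, hcent, hleib⟩ x y
    induction x using TensorProduct.induction_on with
    | zero => simp
    | add x₁ x₂ h₁ h₂ =>
      simp only [map_add, LinearMap.add_apply, h₁, h₂]
      abel
    | tmul s₁ a₁ =>
      induction y using TensorProduct.induction_on with
      | zero => simp
      | add y₁ y₂ h₁ h₂ =>
        simp only [map_add, h₁, h₂]
        abel
      | tmul s₂ a₂ =>
        rw [hmulS, σtmul, hleib]
        have e1 : s₂ • ((1 : S) ⊗ₜ[k] mul a₁ a₂) = mulS ((1 : S) ⊗ₜ a₁) (s₂ ⊗ₜ a₂) := by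
          rw [hmulS, one_mul, smul_tmul', smul_eq_mul, mul_one]
        have e2 : (1 : S) ⊗ₜ[k] mul a₁ a₂ = mulS ((1 : S) ⊗ₜ a₁) ((1 : S) ⊗ₜ a₂) := by
          rw [hmulS, one_mul]
        rw [e1, (hcent s₁ ((1 : S) ⊗ₜ a₁) (s₂ ⊗ₜ a₂)).1, e2,
          (hcent s₂ ((1 : S) ⊗ₜ a₁) ((1 : S) ⊗ₜ a₂)).2, σtmul, σtmul]
        congr 1
        have : lact (s₁ ⊗ₜ[k] a₁) = lact (s₁ • ((1 : S) ⊗ₜ[k] a₁)) := by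
          rw [smul_tmul', smul_eq_mul, mul_one]
        rw [this, map_smul, LinearMap.smul_apply]
  -- key property 3 : η ∘ σ = id
  have hsec : ∀ D : ↥(derRCentSubmodule (k := k) mulS lact ract),
      ∀ (s : S) (x : S ⊗[k] A),
        σfun D.1 (s • x) - s • σfun D.1 x = D.1 s x := by
    rintro ⟨D, hcent, hleib⟩ s x
    induction x using TensorProduct.induction_on with
    | zero => simp
    | add x₁ x₂ h₁ h₂ =>
      simp only [smul_add, map_add, LinearMap.add_apply] at *
      rw [← h₁, ← h₂]
      abel
    | tmul t a =>
      rw [smul_tmul', smul_eq_mul, σtmul, σtmul, hleib]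
      have : t • ((1 : S) ⊗ₜ[k] a) = t ⊗ₜ a := by
        rw [smul_tmul', smul_eq_mul, mul_one]
      rw [this]
      abel
  refine ⟨{ toFun := fun D => σfun D.1,
            map_add' := by
              intro D₁ D₂
              apply TensorProduct.ext'
              intro s a
              simp [σtmul]
            map_smul' := by
              intro c D
              apply TensorProduct.ext'
              intro s a
              simp [σtmul] },
    fun D s a => σtmul D.1 s a, hderiv, hsec, ?_⟩
  intro d hd
  -- the map η(d) : s ↦ (x ↦ d (s • x) - s • d x)
  let Dd : S →ₗ[k] (S ⊗[k] A →ₗ[k] M) :=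
    { toFun := fun s =>
        { toFun := fun x => d (s • x) - s • d x
          map_add' := by
            intro x y
            simp only [smul_add, map_add]
            abel
          map_smul' := by
            intro c x
            simp only [RingHom.id_apply]
            rw [smul_comm s c, map_smul d, map_smul d, smul_comm s c, smul_sub] }
      map_add' := by
        intro s₁ s₂
        refine LinearMap.ext fun x => ?_
        show d ((s₁ + s₂) • x) - (s₁ + s₂) • d x
            = (d (s₁ • x) - s₁ • d x) + (d (s₂ • x) - s₂ • d x)
        rw [add_smul, map_add, add_smul]
        abel
      map_smul' := by
        intro c s
        refine LinearMap.ext fun x => ?_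
        show d ((c • s) • x) - (c • s) • d x = c • (d (s • x) - s • d x)
        rw [smul_assoc, map_smul, smul_assoc, smul_sub] }
  have hDd : Dd ∈ derRCentSubmodule (k := k) mulS lact ract := by
    constructor
    · intro s b₁ b₂
      constructor
      · have e : s • mulS b₁ b₂ = mulS (s • b₁) b₂ := by rw [map_smul, LinearMap.smul_apply]
        show d (s • mulS b₁ b₂) - s • d (mulS b₁ b₂)
            = ract (d (s • b₁) - s • d b₁) b₂
        rw [e, hd (s • b₁) b₂, hd b₁ b₂, map_sub, LinearMap.sub_apply, smul_add]
        have e2 : lact (s • b₁) (d b₂) = s • lact b₁ (d b₂) := by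
          rw [map_smul, LinearMap.smul_apply]
        have e3 : ract (s • d b₁) b₂ = s • ract (d b₁) b₂ := by
          rw [map_smul, LinearMap.smul_apply]
        rw [e2, e3]
        abel
      · have e : s • mulS b₁ b₂ = mulS b₁ (s • b₂) := by rw [map_smul]
        show d (s • mulS b₁ b₂) - s • d (mulS b₁ b₂)
            = lact b₁ (d (s • b₂) - s • d b₂)
        rw [e, hd b₁ (s • b₂), hd b₁ b₂, map_sub, smul_add]
        have e2 : ract (d b₁) (s • b₂) = s • ract (d b₁) b₂ := map_smul _ _ _
        have e3 : lact b₁ (s • d b₂) = s • lact b₁ (d b₂) := map_smul _ _ _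
        rw [e2, e3]
        abel
    · intro s₁ s₂ x
      show d ((s₁ * s₂) • x) - (s₁ * s₂) • d x
          = (d (s₁ • s₂ • x) - s₁ • d (s₂ • x)) + s₁ • (d (s₂ • x) - s₂ • d x)
      rw [mul_smul, mul_smul, smul_sub]
      abel
  set DD : ↥(derRCentSubmodule (k := k) mulS lact ract) := ⟨Dd, hDd⟩ with hDD
  have hσDdlin : ∀ (s : S) (x : S ⊗[k] A),
      (d - σfun Dd) (s • x) = s • (d - σfun Dd) x := by
    intro s x
    have h3 := hsec DD s x
    have hDdapp : (DD : S →ₗ[k] (S ⊗[k] A →ₗ[k] M)) s x = d (s • x) - s • d x := rfl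
    rw [hDdapp] at h3
    simp only [LinearMap.sub_apply, smul_sub]
    exact sub_eq_sub_iff_sub_eq_sub.mpr h3.symm
  refine ⟨(d - σfun Dd, DD), ⟨?_, hσDdlin, by simp [hDD]⟩, ?_⟩
  · exact sub_mem hd (hderiv DD)
  · rintro ⟨p₁, p₂⟩ ⟨hp₁, hp₁lin, hdec⟩
    have hp2 : p₂ = DD := by
      apply Subtype.ext
      apply LinearMap.ext; intro s
      apply LinearMap.ext; intro x
      have : Dd s x = d (s • x) - s • d x := rfl
      rw [this, hdec]
      simp only [LinearMap.add_apply, hp₁lin s x, smul_add]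
      have h3 := hsec p₂ s x
      simp only [LinearMap.coe_mk, AddHom.coe_mk] at h3 ⊢
      rw [← h3]
      abel
    have hp1 : p₁ = d - σfun Dd := by
      rw [hdec, hp2]
      ext x
      simp [hDD]
    rw [Prod.ext_iff]
    exact ⟨hp1, hp2⟩
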